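/- arXiv:1407.0154 — 2 statements merged into one kernel-verified Lean document; each statement's English description precedes it below -/
import Mathlib

section
/- Let E be an n×n integer matrix with det E ≠ 0. The map sending λ ∈ G_{f̃} to the character μ ↦ ⟨λ, μ⟩_E of G_f is a group isomorphism from G_{f̃} onto Hom(G_f, ℂ∖{0}). In particular the symmetry group of the Berglund–Hübsch transpose is canonically isomorphic to the character group of the symmetry group of f. -/
open Complex Matrix

/-- The group `G_f` of diagonal symmetries of the invertible polynomial with exponent
matrix `E`, as a subgroup of the torus `(ℂˣ)ⁿ`. (The symmetry group `G_{f̃}` of the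
Berglund–Hübsch transpose is then `Gf Eᵀ`.) -/
def Gf {n : ℕ} (E : Matrix (Fin n) (Fin n) ℤ) : Subgroup (Fin n → ℂˣ) where
  carrier := {μ | ∀ i, ∏ j, μ j ^ E i j = 1}
  one_mem' := by intro i; simp
  mul_mem' := by
    intro a b ha hb i
    simp only [Pi.mul_apply, mul_zpow, Finset.prod_mul_distrib, ha i, hb i, mul_one]
  inv_mem' := by
    intro a ha i
    simp only [Pi.inv_apply, _root_.inv_zpow, Finset.prod_inv_distrib, ha i, inv_one]

section BH

/-- `e q = exp(2πi q)` as a unit of `ℂ`. -/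
noncomputable def eu (q : ℚ) : ℂˣ :=
  Units.mk0 (Complex.exp (2 * (Real.pi : ℂ) * Complex.I * (q : ℂ))) (Complex.exp_ne_zero _)

lemma eu_coe (q : ℚ) : ((eu q : ℂˣ) : ℂ)
    = Complex.exp (2 * (Real.pi : ℂ) * Complex.I * (q : ℂ)) := rfl

lemma eu_add (a b : ℚ) : eu (a + b) = eu a * eu b := by
  apply Units.ext
  simp only [eu_coe, Units.val_mul, ← Complex.exp_add]
  congr 1
  push_cast
  ring

lemma eu_zero : eu 0 = 1 := by
  apply Units.ext
  simp [eu_coe]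

lemma eu_eq_one_iff {q : ℚ} : eu q = 1 ↔ ∃ m : ℤ, q = m := by
  constructor
  · intro h
    have h' : Complex.exp (2 * (Real.pi : ℂ) * Complex.I * (q : ℂ)) = 1 := by
      simpa [eu_coe] using congrArg Units.val h
    rw [Complex.exp_eq_one_iff] at h'
    obtain ⟨m, hm⟩ := h'
    refine ⟨m, ?_⟩
    have h2 : (2 * (Real.pi : ℂ) * Complex.I) ≠ 0 := by
      simp [Real.pi_ne_zero, Complex.I_ne_zero]
    have h3 : (2 * (Real.pi : ℂ) * Complex.I) * (q : ℂ)
        = (2 * (Real.pi : ℂ) * Complex.I) * (m : ℂ) := by rw [hm]; ring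
    have h4 : (q : ℂ) = (m : ℂ) := mul_left_cancel₀ h2 h3
    exact_mod_cast h4
  · rintro ⟨m, rfl⟩
    apply Units.ext
    simp only [eu_coe, Units.val_one]
    have h5 : (2 * (Real.pi : ℂ) * Complex.I * ((m : ℚ) : ℂ))
        = (m : ℤ) * (2 * (Real.pi : ℂ) * Complex.I) := by push_cast; ring
    rw [h5, Complex.exp_int_mul, Complex.exp_two_pi_mul_I, _root_.one_zpow]

lemma eu_eq_iff {a b : ℚ} : eu a = eu b ↔ ∃ m : ℤ, a - b = m := by
  rw [← eu_eq_one_iff (q := a - b)]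
  constructor
  · intro h
    have : eu (a - b) * eu b = eu b := by rw [← eu_add, sub_add_cancel, h]
    exact mul_right_cancel (by rw [this, one_mul])
  · intro h
    have := congrArg (· * eu b) h
    simpa [← eu_add, sub_add_cancel] using this

lemma eu_zpow (b : ℚ) (m : ℤ) : eu b ^ m = eu ((m : ℚ) * b) := by
  apply Units.ext
  rw [Units.val_zpow_eq_zpow_val, eu_coe, eu_coe, ← Complex.exp_int_mul]
  congr 1
  push_cast
  ring

lemma eu_sum {ι : Type*} (s : Finset ι) (f : ι → ℚ) :
    eu (∑ j ∈ s, f j) = ∏ j ∈ s, eu (f j) := by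
  classical
  induction s using Finset.cons_induction with
  | empty => simp [eu_zero]
  | cons a s ha ih => rw [Finset.sum_cons, Finset.prod_cons, eu_add, ih]

lemma zpow_finset_sum {G : Type*} [CommGroup G] (a : G) {ι : Type*} (s : Finset ι) (f : ι → ℤ) :
    a ^ (∑ i ∈ s, f i) = ∏ i ∈ s, a ^ f i := by
  classical
  induction s using Finset.cons_induction with
  | empty => simp
  | cons b s hb ih => rw [Finset.sum_cons, Finset.prod_cons, _root_.zpow_add, ih]

end BH


section BH2

open Complex Matrix

variable {n : ℕ} {E : Matrix (Fin n) (Fin n) ℤ}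

lemma mem_Gf_iff {μ : Fin n → ℂˣ} : μ ∈ Gf E ↔ ∀ i, ∏ j, μ j ^ E i j = 1 := Iff.rfl

lemma prod_zpow_matrix_one {l : Fin n → ℂˣ} (hl : l ∈ Gf Eᵀ) (k : Fin n → ℤ) :
    ∏ i, l i ^ (∑ j, E i j * k j) = 1 := by
  have h1 : ∀ i, l i ^ (∑ j, E i j * k j) = ∏ j, (l i ^ E i j) ^ k j := by
    intro i
    rw [zpow_finset_sum]
    exact Finset.prod_congr rfl fun j _ => by rw [← _root_.zpow_mul]
  simp_rw [h1]
  rw [Finset.prod_comm]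
  have h2 : ∀ j, ∏ i, (l i ^ E i j) ^ k j = (∏ i, l i ^ E i j) ^ k j := fun j =>
    Finset.prod_zpow _ _ _
  simp_rw [h2]
  have h3 : ∀ j, ∏ i, l i ^ E i j = 1 := by
    intro j
    have := hl j
    simpa [Matrix.transpose_apply] using this
  simp [h3]

lemma Gf_pow_det {μ : Fin n → ℂˣ} (hμ : μ ∈ Gf E) (k : Fin n) : μ k ^ E.det = 1 := by
  have h1 : ∀ i, ∏ j, μ j ^ E i j = 1 := hμ
  have h2 : ∏ i, (∏ j, μ j ^ E i j) ^ (E.adjugate k i) = 1 := by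
    simp [h1]
  calc μ k ^ E.det
      = ∏ j, μ j ^ ((E.adjugate * E) k j) := by
        have : ∀ j, (E.adjugate * E) k j = E.det * (if k = j then 1 else 0) := by
          intro j
          rw [Matrix.adjugate_mul]
          simp [Matrix.one_apply, Matrix.smul_apply, mul_ite]
        simp_rw [this]
        rw [Finset.prod_eq_single k (fun j _ hj => by simp [Ne.symm hj])
          (fun h => absurd (Finset.mem_univ k) h)]
        simp
    _ = ∏ j, μ j ^ (∑ i, E.adjugate k i * E i j) := by
        simp_rw [Matrix.mul_apply]
    _ = ∏ j, ∏ i, (μ j ^ E i j) ^ E.adjugate k i := by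
        refine Finset.prod_congr rfl fun j _ => ?_
        rw [zpow_finset_sum]
        exact Finset.prod_congr rfl fun i _ => by rw [← _root_.zpow_mul, mul_comm]
    _ = ∏ i, (∏ j, μ j ^ E i j) ^ E.adjugate k i := by
        rw [Finset.prod_comm]
        exact Finset.prod_congr rfl fun i _ => Finset.prod_zpow _ _ _
    _ = 1 := h2

lemma Gf_pow_natAbs {μ : Fin n → ℂˣ} (hμ : μ ∈ Gf E) (k : Fin n) :
    μ k ^ (E.det.natAbs) = 1 := by
  have h := Gf_pow_det hμ k
  rcases Int.natAbs_eq E.det with h1 | h1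
  · rw [← zpow_natCast, ← h1, h]
  · rw [← zpow_natCast]
    have : ((E.det.natAbs : ℤ)) = -E.det := by omega
    rw [this, _root_.zpow_neg, h, inv_one]

lemma exists_rat_of_pow {z : ℂˣ} {d : ℕ} (hd : d ≠ 0) (h : z ^ d = 1) : ∃ q : ℚ, z = eu q := by
  have hz : (z : ℂ) ^ d = 1 := by have := congrArg Units.val h; push_cast at this; exact_mod_cast this
  haveI : NeZero d := ⟨hd⟩
  obtain ⟨i, hi, hzi⟩ := (Complex.isPrimitiveRoot_exp d hd).eq_pow_of_pow_eq_one hz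
  refine ⟨(i : ℚ) / d, Units.ext ?_⟩
  rw [eu_coe, ← hzi, ← Complex.exp_nat_mul]
  congr 1
  have hd' : (d : ℂ) ≠ 0 := Nat.cast_ne_zero.mpr hd
  push_cast
  field_simp

lemma exists_log (hE : E.det ≠ 0) (μ : Gf E) :
    ∃ β : Fin n → ℚ, ∀ j, (μ : Fin n → ℂˣ) j = eu (β j) := by
  have hd : E.det.natAbs ≠ 0 := Int.natAbs_ne_zero.mpr hE
  choose q hq using fun j => exists_rat_of_pow hd (Gf_pow_natAbs μ.2 j)
  exact ⟨q, hq⟩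

lemma int_of_log {μ : Fin n → ℂˣ} (hμ : μ ∈ Gf E) {β : Fin n → ℚ}
    (hβ : ∀ j, μ j = eu (β j)) (i : Fin n) :
    ∃ m : ℤ, (∑ j, (E i j : ℚ) * β j) = m := by
  apply eu_eq_one_iff.mp
  rw [eu_sum]
  calc ∏ j, eu ((E i j : ℚ) * β j) = ∏ j, eu (β j) ^ E i j := by
        refine Finset.prod_congr rfl fun j _ => ?_
        rw [eu_zpow]
    _ = ∏ j, μ j ^ E i j := by simp_rw [hβ]
    _ = 1 := hμ i

variable (hE : E.det ≠ 0)

noncomputable def betaOf (μ : Gf E) : Fin n → ℚ := (exists_log hE μ).choose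

lemma betaOf_spec (μ : Gf E) (j : Fin n) :
    (μ : Fin n → ℂˣ) j = eu (betaOf hE μ j) := (exists_log hE μ).choose_spec j

noncomputable def mOf (μ : Gf E) : Fin n → ℤ :=
  fun i => (int_of_log μ.2 (betaOf_spec hE μ) i).choose

lemma mOf_spec (μ : Gf E) (i : Fin n) :
    (∑ j, (E i j : ℚ) * betaOf hE μ j) = mOf hE μ i :=
  (int_of_log μ.2 (betaOf_spec hE μ) i).choose_spec

noncomputable def pair (lam : Gf Eᵀ) (μ : Gf E) : ℂˣ :=
  ∏ i, (lam : Fin n → ℂˣ) i ^ mOf hE μ i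

lemma pair_eq (lam : Gf Eᵀ) (μ : Gf E) {β : Fin n → ℚ}
    (hβ : ∀ j, (μ : Fin n → ℂˣ) j = eu (β j)) {m : Fin n → ℤ}
    (hm : ∀ i, (∑ j, (E i j : ℚ) * β j) = m i) :
    pair hE lam μ = ∏ i, (lam : Fin n → ℂˣ) i ^ m i := by
  have hk : ∀ j, ∃ k : ℤ, betaOf hE μ j - β j = k := by
    intro j
    apply eu_eq_iff.mp
    rw [← betaOf_spec hE μ j, hβ j]
  choose k hkk using hk
  have hm' : ∀ i, mOf hE μ i = m i + ∑ j, E i j * k j := by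
    intro i
    have hq : ((mOf hE μ i : ℤ) : ℚ) = ((m i : ℤ) : ℚ) + ∑ j, ((E i j : ℚ)) * ((k j : ℤ) : ℚ) := by
      rw [← mOf_spec hE μ i, ← hm i]
      have hb : ∀ j, betaOf hE μ j = β j + (k j : ℚ) := by
        intro j
        have := hkk j
        linarith
      simp only [hb, mul_add, Finset.sum_add_distrib]
    have hq2 : ((mOf hE μ i : ℤ) : ℚ) = (((m i + ∑ j, E i j * k j : ℤ)) : ℚ) := by
      rw [hq]; push_cast; ring
    exact_mod_cast hq2
  unfold pair
  simp_rw [hm', _root_.zpow_add, Finset.prod_mul_distrib]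
  rw [prod_zpow_matrix_one lam.2 k, mul_one]

lemma pair_one (lam : Gf Eᵀ) : pair hE lam 1 = 1 := by
  have h := pair_eq hE lam 1 (β := 0) (fun j => by simp [eu_zero]) (m := 0) (fun i => by simp)
  simpa using h

lemma pair_mul_right (lam : Gf Eᵀ) (μ ν : Gf E) :
    pair hE lam (μ * ν) = pair hE lam μ * pair hE lam ν := by
  have hβ : ∀ j, ((μ * ν : Gf E) : Fin n → ℂˣ) j
      = eu (betaOf hE μ j + betaOf hE ν j) := by
    intro j
    rw [eu_add, ← betaOf_spec hE μ j, ← betaOf_spec hE ν j]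
    rfl
  have hm : ∀ i, (∑ j, (E i j : ℚ) * (betaOf hE μ j + betaOf hE ν j))
      = (mOf hE μ i + mOf hE ν i : ℤ) := by
    intro i
    push_cast
    rw [← mOf_spec hE μ i, ← mOf_spec hE ν i, ← Finset.sum_add_distrib]
    exact Finset.sum_congr rfl fun j _ => by ring
  rw [pair_eq hE lam (μ * ν) hβ hm]
  unfold pair
  rw [← Finset.prod_mul_distrib]
  exact Finset.prod_congr rfl fun i _ => by rw [_root_.zpow_add]

lemma pair_mul_left (lam lam' : Gf Eᵀ) (μ : Gf E) :
    pair hE (lam * lam') μ = pair hE lam μ * pair hE lam' μ := by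
  unfold pair
  rw [← Finset.prod_mul_distrib]
  exact Finset.prod_congr rfl fun i _ => by
    show ((lam : Fin n → ℂˣ) i * (lam' : Fin n → ℂˣ) i) ^ mOf hE μ i = _
    rw [mul_zpow]

variable (E) in
noncomputable def Qm : Matrix (Fin n) (Fin n) ℚ := E.map (fun x => (x : ℚ))

lemma Qm_apply (i j : Fin n) : Qm E i j = (E i j : ℚ) := rfl

lemma Qm_det (hE : E.det ≠ 0) : IsUnit (Qm E).det := by
  have h : ((E.det : ℤ) : ℚ) = (Qm E).det := by
    have := RingHom.map_det (Int.castRingHom ℚ) E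
    simpa [Qm, RingHom.mapMatrix_apply] using this
  rw [isUnit_iff_ne_zero, ← h]
  exact_mod_cast hE

lemma QQinv (hE : E.det ≠ 0) : Qm E * (Qm E)⁻¹ = 1 := Matrix.mul_nonsing_inv _ (Qm_det hE)
lemma QinvQ (hE : E.det ≠ 0) : (Qm E)⁻¹ * Qm E = 1 := Matrix.nonsing_inv_mul _ (Qm_det hE)

lemma eu_one : eu 1 = 1 := eu_eq_one_iff.mpr ⟨1, by norm_num⟩

noncomputable def Mb (hE : E.det ≠ 0) (k : Fin n) : Gf E := ⟨fun j => eu ((Qm E)⁻¹ j k), by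
  intro i
  calc ∏ j, eu ((Qm E)⁻¹ j k) ^ E i j = ∏ j, eu ((E i j : ℚ) * (Qm E)⁻¹ j k) := by
        refine Finset.prod_congr rfl fun j _ => ?_
        rw [eu_zpow]
    _ = eu (∑ j, (E i j : ℚ) * (Qm E)⁻¹ j k) := (eu_sum _ _).symm
    _ = eu ((Qm E * (Qm E)⁻¹) i k) := by
        rw [Matrix.mul_apply]
        simp [Qm, Matrix.map_apply]
    _ = 1 := by
        rw [QQinv hE, Matrix.one_apply]
        split
        · exact eu_one
        · exact eu_zero⟩

lemma Mb_coe (k j : Fin n) : ((Mb hE k : Gf E) : Fin n → ℂˣ) j = eu ((Qm E)⁻¹ j k) := rfl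

noncomputable def Psi (χ : Gf E →* ℂˣ) : Gf Eᵀ := ⟨fun k => χ (Mb hE k), by
  intro i
  have h1 : ∏ k, χ (Mb hE k) ^ (Eᵀ i k) = χ (∏ k, (Mb hE k) ^ (Eᵀ i k)) := by
    rw [map_prod]
    exact Finset.prod_congr rfl fun k _ => (map_zpow χ _ _).symm
  rw [h1]
  have h2 : (∏ k, (Mb hE k) ^ (Eᵀ i k)) = 1 := by
    apply Subtype.ext
    have hco : (((∏ k, (Mb hE k) ^ (Eᵀ i k)) : Gf E) : Fin n → ℂˣ)
        = ∏ k, (fun j => eu ((Qm E)⁻¹ j k)) ^ (Eᵀ i k) := by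
      push_cast
      rfl
    rw [hco]
    funext j
    simp only [Finset.prod_apply, Pi.pow_apply, Matrix.transpose_apply,
      OneMemClass.coe_one, Pi.one_apply]
    calc ∏ k, (eu ((Qm E)⁻¹ j k)) ^ (E k i)
        = ∏ k, eu ((Qm E)⁻¹ j k * (Qm E) k i) := by
          refine Finset.prod_congr rfl fun k _ => ?_
          rw [eu_zpow, Qm_apply, mul_comm]
      _ = eu (((Qm E)⁻¹ * Qm E) j i) := by rw [← eu_sum, Matrix.mul_apply]
      _ = 1 := by
          rw [QinvQ hE, Matrix.one_apply]
          split
          · exact eu_one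
          · exact eu_zero
  rw [h2, _root_.map_one]⟩

end BH2

/-- The map sending `λ ∈ G_{f̃}` to the character `μ ↦ ⟨λ, μ⟩_E` of
`G_f` is a group isomorphism `G_{f̃} ≅ Hom(G_f, ℂ∖{0})`; here
`⟨λ, μ⟩_E = exp(2πi αEβᵀ)` for `λ = exp(2πiα)`, `μ = exp(2πiβ)`. -/
theorem stmt11 (n : ℕ) (E : Matrix (Fin n) (Fin n) ℤ) (hE : E.det ≠ 0) :
    ∃ Φ : Gf Eᵀ ≃* ((Gf E) →* ℂˣ),
      ∀ (lam : Gf Eᵀ) (mu : Gf E) (α β : Fin n → ℚ),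
        (∀ j, (((lam : Fin n → ℂˣ) j : ℂˣ) : ℂ)
            = Complex.exp (2 * (Real.pi : ℂ) * Complex.I * (α j : ℂ))) →
        (∀ j, (((mu : Fin n → ℂˣ) j : ℂˣ) : ℂ)
            = Complex.exp (2 * (Real.pi : ℂ) * Complex.I * (β j : ℂ))) →
        ((Φ lam mu : ℂˣ) : ℂ)
          = Complex.exp (2 * (Real.pi : ℂ) * Complex.I *
              ((∑ i, ∑ j, α i * (E i j : ℚ) * β j : ℚ) : ℂ)) := by
  classical
  let F : Gf Eᵀ → (Gf E →* ℂˣ) := fun lam =>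
    { toFun := fun μ => pair hE lam μ
      map_one' := pair_one hE lam
      map_mul' := pair_mul_right hE lam }
  have hleft : ∀ lam, Psi hE (F lam) = lam := by
    intro lam
    apply Subtype.ext
    funext k
    show pair hE lam (Mb hE k) = (lam : Fin n → ℂˣ) k
    have hβ : ∀ j, ((Mb hE k : Gf E) : Fin n → ℂˣ) j = eu ((Qm E)⁻¹ j k) := fun j => rfl
    have hm : ∀ i, (∑ j, (E i j : ℚ) * (Qm E)⁻¹ j k)
        = (((fun i => if i = k then (1 : ℤ) else 0) i : ℤ) : ℚ) := by
      intro i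
      have h0 : (∑ j, (E i j : ℚ) * (Qm E)⁻¹ j k) = (Qm E * (Qm E)⁻¹) i k := by
        rw [Matrix.mul_apply]; simp [Qm, Matrix.map_apply]
      rw [h0, QQinv hE, Matrix.one_apply]
      split <;> simp_all
    rw [pair_eq hE lam (Mb hE k) hβ hm]
    rw [Finset.prod_eq_single k (fun j _ hj => by simp [hj])
      (fun h => absurd (Finset.mem_univ k) h)]
    simp
  have hright : ∀ χ, F (Psi hE χ) = χ := by
    intro χ
    refine MonoidHom.ext fun μ => ?_
    show pair hE (Psi hE χ) μ = χ μ
    have h1 : pair hE (Psi hE χ) μ = χ (∏ i, Mb hE i ^ mOf hE μ i) := by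
      unfold pair
      rw [map_prod]
      refine Finset.prod_congr rfl fun i _ => ?_
      rw [map_zpow]
      rfl
    rw [h1]
    congr 1
    apply Subtype.ext
    have hco : ((∏ i, Mb hE i ^ mOf hE μ i : Gf E) : Fin n → ℂˣ)
        = ∏ i, (fun j => eu ((Qm E)⁻¹ j i)) ^ mOf hE μ i := by push_cast; rfl
    rw [hco]
    funext j
    simp only [Finset.prod_apply, Pi.pow_apply]
    calc ∏ i, eu ((Qm E)⁻¹ j i) ^ mOf hE μ i
        = ∏ i, eu ((mOf hE μ i : ℚ) * (Qm E)⁻¹ j i) :=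
          Finset.prod_congr rfl fun i _ => eu_zpow _ _
      _ = eu (∑ i, (mOf hE μ i : ℚ) * (Qm E)⁻¹ j i) := (eu_sum _ _).symm
      _ = eu (betaOf hE μ j) := by
          congr 1
          calc ∑ i, (mOf hE μ i : ℚ) * (Qm E)⁻¹ j i
              = ∑ i, (∑ l, Qm E i l * betaOf hE μ l) * (Qm E)⁻¹ j i := by
                refine Finset.sum_congr rfl fun i _ => ?_
                rw [← mOf_spec hE μ i]
                simp [Qm, Matrix.map_apply]
            _ = ∑ i, ∑ l, (Qm E)⁻¹ j i * Qm E i l * betaOf hE μ l := by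
                refine Finset.sum_congr rfl fun i _ => ?_
                rw [Finset.sum_mul]
                exact Finset.sum_congr rfl fun l _ => by ring
            _ = ∑ l, (∑ i, (Qm E)⁻¹ j i * Qm E i l) * betaOf hE μ l := by
                rw [Finset.sum_comm]
                exact Finset.sum_congr rfl fun l _ => by rw [Finset.sum_mul]
            _ = ∑ l, ((Qm E)⁻¹ * Qm E) j l * betaOf hE μ l := by
                simp_rw [Matrix.mul_apply]
            _ = betaOf hE μ j := by
                rw [QinvQ hE]
                simp [Matrix.one_apply]
      _ = (μ : Fin n → ℂˣ) j := (betaOf_spec hE μ j).symm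
  refine ⟨{ toFun := F
            invFun := Psi hE
            left_inv := hleft
            right_inv := hright
            map_mul' := fun lam lam' => MonoidHom.ext fun μ => pair_mul_left hE lam lam' μ }, ?_⟩
  intro lam mu α β hα hβ
  have hβ' : ∀ j, (mu : Fin n → ℂˣ) j = eu (β j) := by
    intro j
    apply Units.ext
    rw [eu_coe]
    exact hβ j
  choose m hm using int_of_log mu.2 hβ'
  show ((pair hE lam mu : ℂˣ) : ℂ) = _
  rw [pair_eq hE lam mu hβ' hm]
  have key : (∑ i, α i * (m i : ℚ)) = ∑ i, ∑ j, α i * (E i j : ℚ) * β j := by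
    refine Finset.sum_congr rfl fun i _ => ?_
    rw [← hm i, Finset.mul_sum]
    exact Finset.sum_congr rfl fun j _ => by ring
  calc ((∏ i, (lam : Fin n → ℂˣ) i ^ m i : ℂˣ) : ℂ)
      = ∏ i, (((lam : Fin n → ℂˣ) i : ℂ)) ^ m i := by
        show (Units.coeHom ℂ) (∏ i, (lam : Fin n → ℂˣ) i ^ m i) = _
        rw [map_prod]
        exact Finset.prod_congr rfl fun i _ => Units.val_zpow_eq_zpow_val _ _
    _ = ∏ i, Complex.exp ((m i : ℂ) * (2 * (Real.pi : ℂ) * Complex.I * (α i : ℂ))) := by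
        refine Finset.prod_congr rfl fun i _ => ?_
        rw [hα i, Complex.exp_int_mul]
    _ = Complex.exp (∑ i, (m i : ℂ) * (2 * (Real.pi : ℂ) * Complex.I * (α i : ℂ))) :=
        (Complex.exp_sum _ _).symm
    _ = Complex.exp (2 * (Real.pi : ℂ) * Complex.I *
          ((∑ i, ∑ j, α i * (E i j : ℚ) * β j : ℚ) : ℂ)) := by
        congr 1
        have keyC : (∑ i, (α i : ℂ) * (m i : ℂ))
            = ((∑ i, ∑ j, α i * (E i j : ℚ) * β j : ℚ) : ℂ) := by
          rw [← key]
          push_cast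
          ring
        rw [← keyC, Finset.mul_sum]
        exact Finset.sum_congr rfl fun i _ => by ring
end

section
/- Let A be a finite commutative group, let ε: A → ℂ∖{0} be a group homomorphism whose image has cardinality k, and let m be a positive integer. Then in the polynomial ring ℂ[t], Π_{g ∈ A} (1 − ε(g)^m · t^m) = (1 − t^{lcm(m,k)})^{m·|A| / lcm(m,k)}. -/
open Polynomial


lemma prod_comp_hom {A G M : Type*} [CommGroup A] [Fintype A] [Group G] [CommMonoid M]
    (φ : A →* G) [Fintype φ.range] (f : G → M) :
    ∏ g : A, f (φ g) = (∏ u : φ.range, f (u : G)) ^ Nat.card φ.ker := by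
  classical
  let e : A ≃ φ.range × φ.ker :=
    (Subgroup.groupEquivQuotientProdSubgroup).trans
      (Equiv.prodCongr (QuotientGroup.quotientKerEquivRange φ).toEquiv (Equiv.refl _))
  have he : ∀ g : A, ((e g).1 : G) = φ g := fun g => rfl
  rw [Fintype.prod_equiv e (fun g => f (φ g)) (fun p => f (p.1 : G))
    (fun g => congrArg f (he g).symm)]
  rw [Fintype.prod_prod_type]
  simp [Finset.prod_const, Nat.card_eq_fintype_card, Finset.prod_pow]

lemma prod_nthRoots_one_sub {d : ℕ} (hd : 0 < d) :
    ∏ ζ ∈ nthRootsFinset d (1 : ℂ), (1 - C ζ * X) = 1 - X ^ d := by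
  have hprim := Complex.isPrimitiveRoot_exp d hd.ne'
  have h1 : (X : ℂ[X]) ^ d - 1 = ∏ ζ ∈ nthRootsFinset d (1 : ℂ), (X - C ζ) :=
    X_pow_sub_one_eq_prod hd hprim
  have hne : ∀ ζ ∈ nthRootsFinset d (1 : ℂ), ζ ≠ 0 := by
    intro ζ hζ
    rw [Polynomial.mem_nthRootsFinset hd (1 : ℂ)] at hζ
    intro h; rw [h, zero_pow hd.ne'] at hζ; exact zero_ne_one hζ
  have h2 : ∏ ζ ∈ nthRootsFinset d (1 : ℂ), (X - C ζ⁻¹) = X ^ d - 1 := by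
    rw [h1]
    refine Finset.prod_nbij' (fun ζ => ζ⁻¹) (fun ζ => ζ⁻¹) ?_ ?_ ?_ ?_ ?_
    · intro ζ hζ
      rw [Polynomial.mem_nthRootsFinset hd (1 : ℂ)] at hζ ⊢
      rw [inv_pow, hζ, inv_one]
    · intro ζ hζ
      rw [Polynomial.mem_nthRootsFinset hd (1 : ℂ)] at hζ ⊢
      rw [inv_pow, hζ, inv_one]
    · intro ζ hζ; simp
    · intro ζ hζ; simp
    · intro ζ hζ; simp
  have h3 : ∏ ζ ∈ nthRootsFinset d (1 : ℂ), (-ζ) = -1 := by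
    have := congrArg (eval 0) h1
    simp only [eval_sub, eval_pow, eval_X, eval_one, zero_pow hd.ne', zero_sub,
      eval_prod, eval_sub, eval_X, eval_C, zero_sub] at this
    exact this.symm
  calc ∏ ζ ∈ nthRootsFinset d (1 : ℂ), (1 - C ζ * X)
      = ∏ ζ ∈ nthRootsFinset d (1 : ℂ), ((-C ζ) * (X - C ζ⁻¹)) := by
        refine Finset.prod_congr rfl fun ζ hζ => ?_
        have h0 := hne ζ hζ
        have : C ζ * C ζ⁻¹ = 1 := by rw [← C_mul, mul_inv_cancel₀ h0, C_1]
        linear_combination -this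
    _ = (∏ ζ ∈ nthRootsFinset d (1 : ℂ), (-C ζ)) * ∏ ζ ∈ nthRootsFinset d (1 : ℂ), (X - C ζ⁻¹) :=
        Finset.prod_mul_distrib
    _ = 1 - X ^ d := by
        rw [h2]
        have : ∏ ζ ∈ nthRootsFinset d (1 : ℂ), (-C ζ : ℂ[X]) = C (-1) := by
          rw [← h3, map_prod]
          exact Finset.prod_congr rfl fun ζ _ => (map_neg C ζ).symm
        rw [this, map_neg, C_1]; ring

/-- Let `A` be a finite commutative group, `ε : A → ℂ∖{0}` a
homomorphism whose image has cardinality `k`, and `m` a positive integer. Then in `ℂ[t]`,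
`∏_{g ∈ A} (1 − ε(g)^m t^m) = (1 − t^{lcm(m,k)})^{m|A|/lcm(m,k)}`. -/
theorem stmt16 {A : Type*} [CommGroup A] [Fintype A] (ε : A →* ℂˣ) (k m : ℕ)
    (hk : Nat.card ε.range = k) (hm : 0 < m) :
    ∏ g : A, (1 - Polynomial.C ((ε g : ℂ) ^ m) * Polynomial.X ^ m)
      = (1 - Polynomial.X ^ Nat.lcm m k) ^ (m * Fintype.card A / Nat.lcm m k) := by
  classical
  have hk0 : 0 < k := hk ▸ Nat.card_pos
  set φ : A →* ℂˣ := (powMonoidHom m).comp ε with hφdef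
  haveI : Fintype φ.range := Fintype.ofFinite _
  haveI : Fintype ε.range := Fintype.ofFinite _
  obtain ⟨w, hw⟩ := IsCyclic.exists_generator (α := ε.range)
  have hordw : orderOf (w : ℂˣ) = k := by
    rw [orderOf_submonoid, orderOf_eq_card_of_forall_mem_zpowers hw]
    simpa [Nat.card_eq_fintype_card] using hk
  set u : ℂˣ := (w : ℂˣ) ^ m with hu
  have hrange : φ.range = Subgroup.zpowers u := by
    apply le_antisymm
    · rintro x ⟨g, rfl⟩
      obtain ⟨j, hj⟩ := hw ⟨ε g, ⟨g, rfl⟩⟩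
      have hj' : (w : ℂˣ) ^ j = ε g := by
        have := congrArg (fun x : ε.range => (x : ℂˣ)) hj
        simpa using this
      refine ⟨j, ?_⟩
      show u ^ j = φ g
      simp only [hφdef, MonoidHom.comp_apply, powMonoidHom_apply, hu]
      rw [← hj']
      group
    · rintro x ⟨j, rfl⟩
      have hwj : (w : ℂˣ) ^ j ∈ ε.range := ε.range.zpow_mem w.2 j
      obtain ⟨g, hg⟩ := hwj
      refine ⟨g, ?_⟩
      show φ g = u ^ j
      simp only [hφdef, MonoidHom.comp_apply, powMonoidHom_apply, hu]
      rw [hg]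
      group
  set d := orderOf u with hdd
  have hcard_range : Nat.card φ.range = d := by rw [hrange]; exact Nat.card_zpowers u
  have hd_eq : d = k / Nat.gcd k m := by rw [hdd, hu, orderOf_pow' _ hm.ne', hordw]
  have hgcdpos : 0 < Nat.gcd k m := Nat.gcd_pos_of_pos_left m hk0
  have hd0 : 0 < d := by
    rw [hd_eq]
    exact Nat.div_pos (Nat.le_of_dvd hk0 (Nat.gcd_dvd_left k m)) hgcdpos
  have hmd : m * d = Nat.lcm m k := by
    rw [hd_eq, Nat.lcm, Nat.gcd_comm k m, Nat.mul_div_assoc m (Nat.gcd_dvd_right m k)]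
  have hA : Fintype.card A = d * Nat.card φ.ker := by
    have h1 := Subgroup.card_eq_card_quotient_mul_card_subgroup φ.ker
    have h2 : Nat.card (A ⧸ φ.ker) = Nat.card φ.range :=
      Nat.card_congr (QuotientGroup.quotientKerEquivRange φ).toEquiv
    rw [← Nat.card_eq_fintype_card, h1, h2, hcard_range]
  have hexp : m * Fintype.card A / Nat.lcm m k = Nat.card φ.ker := by
    rw [hA, ← hmd, ← mul_assoc, Nat.mul_div_cancel_left _ (by positivity : 0 < m * d)]
  have hsplit : ∏ g : A, (1 - C ((ε g : ℂ) ^ m) * X ^ m)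
      = (∏ v : φ.range, (1 - C ((v : ℂˣ) : ℂ) * X ^ m)) ^ Nat.card φ.ker := by
    rw [← prod_comp_hom φ (fun x : ℂˣ => 1 - C ((x : ℂ)) * X ^ m)]
    refine Finset.prod_congr rfl fun g _ => ?_
    simp [hφdef, powMonoidHom_apply]
  have hinj : Function.Injective (fun v : φ.range => ((v : ℂˣ) : ℂ)) :=
    fun a b h => Subtype.ext (Units.ext h)
  have hv_mem : ∀ v : φ.range, ((v : ℂˣ) : ℂ) ∈ nthRootsFinset d (1 : ℂ) := by
    intro v
    rw [Polynomial.mem_nthRootsFinset hd0 (1 : ℂ)]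
    have h1 : v ^ d = 1 := by rw [← hcard_range]; exact pow_card_eq_one'
    have h2 : (v : ℂˣ) ^ d = 1 := by
      have := congrArg (fun x : φ.range => (x : ℂˣ)) h1
      simpa using this
    have := congrArg (fun x : ℂˣ => (x : ℂ)) h2
    simpa using this
  have himg : Finset.univ.image (fun v : φ.range => ((v : ℂˣ) : ℂ)) = nthRootsFinset d (1 : ℂ) := by
    apply Finset.eq_of_subset_of_card_le
    · intro ζ hζ
      simp only [Finset.mem_image, Finset.mem_univ, true_and] at hζ
      obtain ⟨v, rfl⟩ := hζ
      exact hv_mem v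
    · rw [(Complex.isPrimitiveRoot_exp d hd0.ne').card_nthRootsFinset,
        Finset.card_image_of_injective _ hinj, Finset.card_univ,
        ← Nat.card_eq_fintype_card, hcard_range]
  have hprod_range : ∏ v : φ.range, (1 - C ((v : ℂˣ) : ℂ) * X ^ m)
      = ∏ ζ ∈ nthRootsFinset d (1 : ℂ), (1 - C ζ * X ^ m) := by
    rw [← himg, Finset.prod_image (fun a _ b _ h => hinj h)]
  have hfinal : ∏ ζ ∈ nthRootsFinset d (1 : ℂ), (1 - C ζ * X ^ m) = 1 - X ^ Nat.lcm m k := by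
    have h := congrArg (aeval (X ^ m : ℂ[X])) (prod_nthRoots_one_sub hd0)
    simp only [map_prod, map_sub, map_one, map_mul, aeval_C, aeval_X, map_pow,
      Polynomial.algebraMap_eq] at h
    rw [h, ← pow_mul, hmd]
  rw [hsplit, hprod_range, hfinal, hexp]
end
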